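/- arXiv:physics/9706006 — 2 statements merged into one kernel-verified Lean document; each statement's English description precedes it below -/
import Mathlib

section
/- For the 3×3 Gell-Mann matrices, the fully symmetrized fourth-order trace is Tr(λ_{(i_1} λ_{i_2} λ_{i_3} λ_{i_4)}) = 2 δ_{(i_1 i_2} δ_{i_3 i_4)}, i.e. the fourth-order symmetric invariant tensor of su(3) is non-primitive (proportional to the symmetrized product of Killing tensors). -/
open Matrix in
theorem core6 (A B C D : Matrix (Fin 3) (Fin 3) ℂ)
    (hA : A.trace = 0) (hB : B.trace = 0) (hC : C.trace = 0) (hD : D.trace = 0) :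
    (A*B*C*D).trace + (A*B*D*C).trace + (A*C*B*D).trace + (A*C*D*B).trace
      + (A*D*B*C).trace + (A*D*C*B).trace
    = (A*B).trace*(C*D).trace + (A*C).trace*(B*D).trace + (A*D).trace*(C*B).trace := by
  simp only [Matrix.trace, Matrix.diag, Matrix.mul_apply, Fin.sum_univ_succ,
    Fin.sum_univ_zero, add_zero, Fin.succ_zero_eq_one, Fin.succ_one_eq_two] at *
  have hA' : A 2 2 = -A 0 0 - A 1 1 := by linear_combination hA
  have hB' : B 2 2 = -B 0 0 - B 1 1 := by linear_combination hB
  have hC' : C 2 2 = -C 0 0 - C 1 1 := by linear_combination hC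
  have hD' : D 2 2 = -D 0 0 - D 1 1 := by linear_combination hD
  rw [hA', hB', hC', hD']
  ring

/-- for the Gell-Mann matrices (a basis of traceless hermitian 3×3 matrices
with `Tr(λ_iλ_j) = 2δ_{ij}`), the fully symmetrized fourth-order trace is
`Tr(λ_{(i₁}λ_{i₂}λ_{i₃}λ_{i₄)}) = 2 δ_{(i₁i₂}δ_{i₃i₄)}`. -/
theorem stmt6
    (lam : Fin 8 → Matrix (Fin 3) (Fin 3) ℂ)
    (hherm : ∀ a, (lam a).IsHermitian)
    (htrless : ∀ a, (lam a).trace = 0)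
    (htr : ∀ a b, (lam a * lam b).trace = if a = b then 2 else 0) :
    ∀ i : Fin 4 → Fin 8,
      (24 : ℂ)⁻¹ * ∑ σ : Equiv.Perm (Fin 4),
          (lam (i (σ 0)) * lam (i (σ 1)) * lam (i (σ 2)) * lam (i (σ 3))).trace
      = 2 * ((24 : ℂ)⁻¹ * ∑ σ : Equiv.Perm (Fin 4),
          (if i (σ 0) = i (σ 1) then (1:ℂ) else 0) *
          (if i (σ 2) = i (σ 3) then (1:ℂ) else 0)) := by
  intro i
  set W : Equiv.Perm (Fin 4) → ℂ := fun σ =>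
    (lam (i (σ 0)) * lam (i (σ 1)) * lam (i (σ 2)) * lam (i (σ 3))).trace with hW
  set Q : Equiv.Perm (Fin 4) → ℂ := fun σ =>
    (lam (i (σ 0)) * lam (i (σ 1))).trace * (lam (i (σ 2)) * lam (i (σ 3))).trace with hQ
  have key : ∀ σ : Equiv.Perm (Fin 4),
      W σ + W (σ * Equiv.swap 2 3) + W (σ * Equiv.swap 1 2)
        + W (σ * (Equiv.swap 1 2 * Equiv.swap 2 3))
        + W (σ * (Equiv.swap 2 3 * Equiv.swap 1 2)) + W (σ * Equiv.swap 1 3)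
      = Q σ + Q (σ * Equiv.swap 1 2) + Q (σ * Equiv.swap 1 3) := by
    intro σ
    simp only [hW, hQ, Equiv.Perm.mul_apply, Equiv.swap_apply_def]
    norm_num
    exact core6 _ _ _ _ (htrless _) (htrless _) (htrless _) (htrless _)
  have hsumW : ∀ τ : Equiv.Perm (Fin 4),
      ∑ σ : Equiv.Perm (Fin 4), W (σ * τ) = ∑ σ : Equiv.Perm (Fin 4), W σ :=
    fun τ => Equiv.sum_comp (Equiv.mulRight τ) W
  have hsumQ : ∀ τ : Equiv.Perm (Fin 4),
      ∑ σ : Equiv.Perm (Fin 4), Q (σ * τ) = ∑ σ : Equiv.Perm (Fin 4), Q σ :=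
    fun τ => Equiv.sum_comp (Equiv.mulRight τ) Q
  have hmain : (6:ℂ) * ∑ σ : Equiv.Perm (Fin 4), W σ
      = 3 * ∑ σ : Equiv.Perm (Fin 4), Q σ := by
    have : ∑ σ : Equiv.Perm (Fin 4),
        (W σ + W (σ * Equiv.swap 2 3) + W (σ * Equiv.swap 1 2)
          + W (σ * (Equiv.swap 1 2 * Equiv.swap 2 3))
          + W (σ * (Equiv.swap 2 3 * Equiv.swap 1 2)) + W (σ * Equiv.swap 1 3))
        = ∑ σ : Equiv.Perm (Fin 4), (Q σ + Q (σ * Equiv.swap 1 2) + Q (σ * Equiv.swap 1 3)) :=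
      Finset.sum_congr rfl (fun σ _ => key σ)
    simp only [Finset.sum_add_distrib, hsumW, hsumQ] at this
    linear_combination this
  have hq : ∑ σ : Equiv.Perm (Fin 4),
      (if i (σ 0) = i (σ 1) then (1:ℂ) else 0) * (if i (σ 2) = i (σ 3) then (1:ℂ) else 0)
      = (4:ℂ)⁻¹ * ∑ σ : Equiv.Perm (Fin 4), Q σ := by
    rw [Finset.mul_sum]
    refine Finset.sum_congr rfl fun σ _ => ?_
    simp only [hQ, htr]
    split_ifs <;> norm_num
  rw [hq]
  linear_combination (24:ℂ)⁻¹ * 6⁻¹ * hmain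
end

section
/- For su(n), the totally symmetric rank-4 tensor t_{i_1 i_2 i_3 i_4} := (1/120)[ n(n²+1) d^{(4)}_{(i_1 i_2 i_3 i_4)} - 2(n²-4) δ_{(i_1 i_2} δ_{i_3 i_4)} ] is traceless: Σ_σ t_{σ σ i_3 i_4} = 0 for all i_3, i_4. -/
set_option maxHeartbeats 4000000 in
/-- for `su(n)`, the totally symmetric rank-4 tensor
`t_{i₁i₂i₃i₄} = (1/120)[n(n²+1) d^{(4)}_{(i₁i₂i₃i₄)} - 2(n²-4) δ_{(i₁i₂}δ_{i₃i₄)}]`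
(with `d^{(4)}_{abcd} = Σ_x d_{abx} d_{xcd}`) is traceless: `Σ_σ t_{σσi₃i₄} = 0`. -/
theorem stmt18 (n : ℕ) (hn : 2 ≤ n)
    (d : Fin (n^2-1) → Fin (n^2-1) → Fin (n^2-1) → ℝ)
    (hdsym : ∀ a b c, d a b c = d b a c ∧ d a b c = d a c b)
    (hdcontr : ∀ a b, ∑ c, ∑ e, d a c e * d b c e =
      (((n:ℝ)^2 - 4)/(n:ℝ)) * (if a = b then 1 else 0))
    (hdtrless : ∀ a, ∑ b, d a b b = 0)
    (t : (Fin 4 → Fin (n^2-1)) → ℝ)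
    (ht : ∀ i, t i = (120 : ℝ)⁻¹ *
      ((n:ℝ) * ((n:ℝ)^2 + 1) * ((24 : ℝ)⁻¹ * ∑ σ : Equiv.Perm (Fin 4), ∑ x,
          d (i (σ 0)) (i (σ 1)) x * d x (i (σ 2)) (i (σ 3)))
        - 2 * ((n:ℝ)^2 - 4) * ((24 : ℝ)⁻¹ * ∑ σ : Equiv.Perm (Fin 4),
          (if i (σ 0) = i (σ 1) then (1:ℝ) else 0) *
          (if i (σ 2) = i (σ 3) then (1:ℝ) else 0)))) :
    ∀ i₃ i₄, ∑ s, t ![s, s, i₃, i₄] = 0 := by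
  intro i₃ i₄
  have hcomm1 : ∀ a b c, d a b c = d b a c := fun a b c => (hdsym a b c).1
  have hcomm2 : ∀ a b c, d a b c = d a c b := fun a b c => (hdsym a b c).2
  have hz0 : ∀ x, ∑ s, d s s x = 0 := by
    intro x
    have h : ∀ s, d s s x = d x s s := fun s => by rw [hcomm2 s s x, hcomm1 s x s]
    simp_rw [h]; exact hdtrless x
  have hz1 : ∀ u v : Fin (n^2-1), ∑ s, ∑ x, d s s x * d x u v = 0 := by
    intro u v
    rw [Finset.sum_comm]
    simp_rw [← Finset.sum_mul, hz0, zero_mul, Finset.sum_const_zero]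
  have hz2 : ∀ u v : Fin (n^2-1), ∑ s, ∑ x, d u v x * d x s s = 0 := by
    intro u v
    rw [Finset.sum_comm]
    simp_rw [← Finset.mul_sum, hdtrless, mul_zero, Finset.sum_const_zero]
  have hm1 : ∀ u v : Fin (n^2-1), ∑ s, ∑ x, d s u x * d x s v =
      (((n:ℝ)^2 - 4)/(n:ℝ)) * (if u = v then 1 else 0) := by
    intro u v
    have h : ∀ s x, d s u x * d x s v = d u s x * d v s x := by
      intro s x
      rw [hcomm1 s u x, hcomm2 x s v, hcomm1 x v s, hcomm2 v x s]
    simp_rw [h]; exact hdcontr u v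
  have hm2 : ∀ u v : Fin (n^2-1), ∑ s, ∑ x, d s u x * d x v s =
      (((n:ℝ)^2 - 4)/(n:ℝ)) * (if u = v then 1 else 0) := by
    intro u v
    have h : ∀ s x, d s u x * d x v s = d u s x * d v s x := by
      intro s x
      rw [hcomm1 s u x, hcomm1 x v s, hcomm2 v x s]
    simp_rw [h]; exact hdcontr u v
  have hm3 : ∀ u v : Fin (n^2-1), ∑ s, ∑ x, d u s x * d x s v =
      (((n:ℝ)^2 - 4)/(n:ℝ)) * (if u = v then 1 else 0) := by
    intro u v
    have h : ∀ s x, d u s x * d x s v = d u s x * d v s x := by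
      intro s x
      rw [hcomm2 x s v, hcomm1 x v s, hcomm2 v x s]
    simp_rw [h]; exact hdcontr u v
  have hm4 : ∀ u v : Fin (n^2-1), ∑ s, ∑ x, d u s x * d x v s =
      (((n:ℝ)^2 - 4)/(n:ℝ)) * (if u = v then 1 else 0) := by
    intro u v
    have h : ∀ s x, d u s x * d x v s = d u s x * d v s x := by
      intro s x
      rw [hcomm1 x v s, hcomm2 v x s]
    simp_rw [h]; exact hdcontr u v
  have hcast : ((n^2-1 : ℕ) : ℝ) = (n:ℝ)^2 - 1 := by
    have h : 1 ≤ n^2 := by nlinarith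
    push_cast [h]
    ring
  have hG : ∀ a b c e : Fin 4, a ≠ b → a ≠ c → a ≠ e → b ≠ c → b ≠ e → c ≠ e →
      (∑ s : Fin (n^2-1), ∑ x, d (![s, s, i₃, i₄] a) (![s, s, i₃, i₄] b) x *
        d x (![s, s, i₃, i₄] c) (![s, s, i₃, i₄] e)) =
      if (a ≤ 1 ↔ b ≤ 1) then 0 else (((n:ℝ)^2 - 4)/(n:ℝ)) * (if i₃ = i₄ then 1 else 0) := by
    intro a b c e hab hac hae hbc hbe hce
    have ha : a = 0 ∨ a = 1 ∨ a = 2 ∨ a = 3 := by omega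
    have hb : b = 0 ∨ b = 1 ∨ b = 2 ∨ b = 3 := by omega
    have hc : c = 0 ∨ c = 1 ∨ c = 2 ∨ c = 3 := by omega
    have he : e = 0 ∨ e = 1 ∨ e = 2 ∨ e = 3 := by omega
    rcases ha with rfl|rfl|rfl|rfl <;> rcases hb with rfl|rfl|rfl|rfl <;>
      rcases hc with rfl|rfl|rfl|rfl <;> rcases he with rfl|rfl|rfl|rfl <;>
    first
    | exact absurd rfl hab | exact absurd rfl hac | exact absurd rfl hae
    | exact absurd rfl hbc | exact absurd rfl hbe | exact absurd rfl hce
    | (simp only [Matrix.cons_val_zero, Matrix.cons_val_one, Matrix.head_cons,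
        Matrix.cons_val_two, Matrix.cons_val_three, Matrix.tail_cons]
       first
       | (rw [if_pos (by decide)]; first | exact hz1 _ _ | exact hz2 _ _)
       | (rw [if_neg (by decide)]
          first
          | exact hm1 i₃ i₄ | exact hm2 i₃ i₄ | exact hm3 i₃ i₄ | exact hm4 i₃ i₄
          | (rw [hm1 i₄ i₃]; simp [eq_comm]) | (rw [hm2 i₄ i₃]; simp [eq_comm])
          | (rw [hm3 i₄ i₃]; simp [eq_comm]) | (rw [hm4 i₄ i₃]; simp [eq_comm])))
  have hH : ∀ a b c e : Fin 4, a ≠ b → a ≠ c → a ≠ e → b ≠ c → b ≠ e → c ≠ e →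
      (∑ s : Fin (n^2-1), (if (![s, s, i₃, i₄] a) = (![s, s, i₃, i₄] b) then (1:ℝ) else 0) *
        (if (![s, s, i₃, i₄] c) = (![s, s, i₃, i₄] e) then (1:ℝ) else 0)) =
      if (a ≤ 1 ↔ b ≤ 1) then ((n:ℝ)^2-1) * (if i₃ = i₄ then 1 else 0)
        else (if i₃ = i₄ then 1 else 0) := by
    intro a b c e hab hac hae hbc hbe hce
    have ha : a = 0 ∨ a = 1 ∨ a = 2 ∨ a = 3 := by omega
    have hb : b = 0 ∨ b = 1 ∨ b = 2 ∨ b = 3 := by omega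
    have hc : c = 0 ∨ c = 1 ∨ c = 2 ∨ c = 3 := by omega
    have he : e = 0 ∨ e = 1 ∨ e = 2 ∨ e = 3 := by omega
    rcases ha with rfl|rfl|rfl|rfl <;> rcases hb with rfl|rfl|rfl|rfl <;>
      rcases hc with rfl|rfl|rfl|rfl <;> rcases he with rfl|rfl|rfl|rfl <;>
    first
    | exact absurd rfl hab | exact absurd rfl hac | exact absurd rfl hae
    | exact absurd rfl hbc | exact absurd rfl hbe | exact absurd rfl hce
    | (simp only [Matrix.cons_val_zero, Matrix.cons_val_one, Matrix.head_cons,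
        Matrix.cons_val_two, Matrix.cons_val_three, Matrix.tail_cons,
        show ((0:Fin 4) ≤ 1) = True from by decide, show ((1:Fin 4) ≤ 1) = True from by decide,
        show ((2:Fin 4) ≤ 1) = False from by decide, show ((3:Fin 4) ≤ 1) = False from by decide,
        iff_self, true_iff, iff_true, false_iff, iff_false, not_true, not_false_eq_true,
        if_true, if_false]
       simp [hcast, eq_comm])
  have hnR : (n:ℝ) ≠ 0 := Nat.cast_ne_zero.mpr (by omega)
  have hne : ∀ σ : Equiv.Perm (Fin 4), ∀ i j : Fin 4, i ≠ j → σ i ≠ σ j :=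
    fun σ i j h hh => h (σ.injective hh)
  simp only [ht]
  rw [← Finset.mul_sum, Finset.sum_sub_distrib]
  simp_rw [← Finset.mul_sum]
  rw [Finset.sum_comm (s := Finset.univ) (t := Finset.univ)
      (f := fun s (σ : Equiv.Perm (Fin 4)) => ∑ x,
        d (![s, s, i₃, i₄] (σ 0)) (![s, s, i₃, i₄] (σ 1)) x *
        d x (![s, s, i₃, i₄] (σ 2)) (![s, s, i₃, i₄] (σ 3)))]
  rw [Finset.sum_comm (s := Finset.univ) (t := Finset.univ)
      (f := fun s (σ : Equiv.Perm (Fin 4)) =>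
        (if (![s, s, i₃, i₄] (σ 0)) = (![s, s, i₃, i₄] (σ 1)) then (1:ℝ) else 0) *
        (if (![s, s, i₃, i₄] (σ 2)) = (![s, s, i₃, i₄] (σ 3)) then (1:ℝ) else 0))]
  rw [Finset.sum_congr rfl (fun σ _ => hG (σ 0) (σ 1) (σ 2) (σ 3)
      (hne σ 0 1 (by decide)) (hne σ 0 2 (by decide)) (hne σ 0 3 (by decide))
      (hne σ 1 2 (by decide)) (hne σ 1 3 (by decide)) (hne σ 2 3 (by decide)))]
  rw [Finset.sum_congr rfl (fun σ _ => hH (σ 0) (σ 1) (σ 2) (σ 3)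
      (hne σ 0 1 (by decide)) (hne σ 0 2 (by decide)) (hne σ 0 3 (by decide))
      (hne σ 1 2 (by decide)) (hne σ 1 3 (by decide)) (hne σ 2 3 (by decide)))]
  rw [Finset.sum_ite, Finset.sum_ite]
  rw [Finset.sum_const, Finset.sum_const, Finset.sum_const, Finset.sum_const]
  have c1 : (Finset.univ.filter (fun σ : Equiv.Perm (Fin 4) => (σ 0 ≤ 1 ↔ σ 1 ≤ 1))).card = 8 := by
    decide
  have c2 : (Finset.univ.filter (fun σ : Equiv.Perm (Fin 4) => ¬(σ 0 ≤ 1 ↔ σ 1 ≤ 1))).card = 16 := by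
    decide
  rw [c1, c2]
  simp only [nsmul_eq_mul, Nat.cast_ofNat, smul_zero]
  by_cases hc : i₃ = i₄ <;> simp only [hc, if_true, if_false] <;> field_simp <;> ring
end
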